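/- For any density matrix ρ on a finite-dimensional Hilbert space, its largest eigenvalue λ satisfies 1 − λ = min over unit vectors ξ of the trace distance D(ρ, |ξ⟩⟨ξ|). -/

import Mathlib

open scoped ComplexOrder

/-- The trace norm (sum of singular values) of a complex matrix. -/
noncomputable def traceNorm {d : ℕ} (X : Matrix (Fin d) (Fin d) ℂ) : ℝ :=
  (((Matrix.posSemidef_conjTranspose_mul_self X).1.eigenvectorUnitary.1 *
      Matrix.diagonal (((↑) : ℝ → ℂ) ∘ (√·) ∘ (Matrix.posSemidef_conjTranspose_mul_self X).1.eigenvalues) *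
      (star (Matrix.posSemidef_conjTranspose_mul_self X).1.eigenvectorUnitary : Matrix (Fin d) (Fin d) ℂ)).trace).re

open Matrix in
lemma conj_mul_conj {d : ℕ} {Uc : Matrix (Fin d) (Fin d) ℂ} (hU1' : star Uc * Uc = 1)
    (a b : Fin d → ℂ) :
    (Uc * diagonal a * star Uc) * (Uc * diagonal b * star Uc)
      = Uc * diagonal (a * b) * star Uc := by
  simp only [Matrix.mul_assoc]
  rw [← Matrix.mul_assoc (star Uc) Uc, hU1', Matrix.one_mul,
    ← Matrix.mul_assoc (diagonal a), Matrix.diagonal_mul_diagonal]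
  rfl

open Matrix in
lemma conj_isHermitian {d : ℕ} (Uc : Matrix (Fin d) (Fin d) ℂ) (μ : Fin d → ℝ) :
    (Uc * diagonal (fun i => (μ i : ℂ)) * star Uc).IsHermitian := by
  unfold Matrix.IsHermitian
  rw [Matrix.star_eq_conjTranspose, Matrix.conjTranspose_mul, Matrix.conjTranspose_mul,
    Matrix.diagonal_conjTranspose, Matrix.conjTranspose_conjTranspose, Matrix.mul_assoc]
  congr 2
  ext i
  simp [Pi.star_def, Complex.conj_ofReal]

open Matrix MatrixOrder in
lemma traceNorm_conj_diag {d : ℕ} (U : Matrix.unitaryGroup (Fin d) ℂ) (μ : Fin d → ℝ) :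
    traceNorm ((U : Matrix (Fin d) (Fin d) ℂ) * diagonal (fun i => (μ i : ℂ)) *
      star (U : Matrix (Fin d) (Fin d) ℂ)) = ∑ i, |μ i| := by
  set Uc : Matrix (Fin d) (Fin d) ℂ := (U : Matrix (Fin d) (Fin d) ℂ) with hUc
  have hU1' : star Uc * Uc = 1 := (Matrix.mem_unitaryGroup_iff').mp U.2
  set X := Uc * diagonal (fun i => (μ i : ℂ)) * star Uc with hX
  set S := Uc * diagonal (fun i => ((|μ i| : ℝ) : ℂ)) * star Uc with hS
  have hSpsd : S.PosSemidef := by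
    apply Matrix.PosSemidef.mul_mul_conjTranspose_same (B := Uc)
    refine Matrix.posSemidef_diagonal_iff.mpr fun i => ?_
    exact_mod_cast abs_nonneg (μ i)
  have hsq : S ^ 2 = Xᴴ * X := by
    rw [(conj_isHermitian Uc μ).eq, pow_two, hS, hX, conj_mul_conj hU1', conj_mul_conj hU1']
    have hfun : (fun i => ((|μ i| : ℝ) : ℂ)) * (fun i => ((|μ i| : ℝ) : ℂ))
        = (fun i => ((μ i : ℝ) : ℂ)) * (fun i => ((μ i : ℝ) : ℂ)) := by
      funext i
      simp only [Pi.mul_apply, ← Complex.ofReal_mul, ← sq, sq_abs, ← Complex.ofReal_pow]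
    rw [hfun]
  have hXX := Matrix.posSemidef_conjTranspose_mul_self X
  have hkey : traceNorm X = (CFC.sqrt (Xᴴ * X)).trace.re := by
    rw [CFC.sqrt_eq_real_sqrt _ hXX.nonneg, cfcₙ_eq_cfc, hXX.1.cfc_eq]
    simp [traceNorm, Matrix.IsHermitian.cfc, Unitary.conjStarAlgAut_apply]
  have := CFC.sqrt_unique (a := Xᴴ * X) (b := S) (by rw [← hsq, pow_two]) hSpsd.nonneg
  rw [hkey, this, hS, Matrix.trace_mul_comm, ← Matrix.mul_assoc, hU1', Matrix.one_mul,
    Matrix.trace_diagonal]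
  simp

open Matrix in
lemma quad_form_eq {d : ℕ} (U : Matrix.unitaryGroup (Fin d) ℂ) (μ : Fin d → ℝ)
    (ξ : Fin d → ℂ) :
    ∃ c : Fin d → ℝ, (∀ i, 0 ≤ c i) ∧ ((∑ i, c i : ℝ) : ℂ) = star ξ ⬝ᵥ ξ ∧
      star ξ ⬝ᵥ (((U : Matrix (Fin d) (Fin d) ℂ) * diagonal (fun i => (μ i : ℂ)) *
        star (U : Matrix (Fin d) (Fin d) ℂ)) *ᵥ ξ) = ((∑ i, μ i * c i : ℝ) : ℂ) := by
  set Uc : Matrix (Fin d) (Fin d) ℂ := (U : Matrix (Fin d) (Fin d) ℂ) with hUc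
  have hU1 : Uc * star Uc = 1 := (Matrix.mem_unitaryGroup_iff).mp U.2
  set η : Fin d → ℂ := star Uc *ᵥ ξ with hη
  have hstar : star ξ ᵥ* Uc = star η := by
    rw [hη, Matrix.star_mulVec, Matrix.star_eq_conjTranspose, Matrix.conjTranspose_conjTranspose]
  refine ⟨fun i => Complex.normSq (η i), fun i => Complex.normSq_nonneg _, ?_, ?_⟩
  · have : star η ⬝ᵥ η = star ξ ⬝ᵥ ξ := by
      rw [← hstar, ← Matrix.dotProduct_mulVec, hη, Matrix.mulVec_mulVec, hU1, Matrix.one_mulVec]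
    rw [← this]
    simp only [dotProduct, Pi.star_apply, RCLike.star_def]
    push_cast
    exact Finset.sum_congr rfl fun i _ => by rw [← Complex.normSq_eq_conj_mul_self]
  · rw [← Matrix.mulVec_mulVec, ← Matrix.mulVec_mulVec, Matrix.dotProduct_mulVec, hstar, ← hη]
    simp only [dotProduct, Matrix.mulVec_diagonal, Pi.star_apply, RCLike.star_def]
    push_cast
    refine Finset.sum_congr rfl fun i _ => ?_
    rw [Complex.normSq_eq_conj_mul_self (z := η i)]
    ring

open Matrix in
lemma trace_conj_diag {d : ℕ} (U : Matrix.unitaryGroup (Fin d) ℂ) (f : Fin d → ℂ) :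
    ((U : Matrix (Fin d) (Fin d) ℂ) * diagonal f * star (U : Matrix (Fin d) (Fin d) ℂ)).trace
      = ∑ i, f i := by
  rw [Matrix.trace_mul_comm, ← Matrix.mul_assoc, (Matrix.mem_unitaryGroup_iff').mp U.2,
    Matrix.one_mul, Matrix.trace_diagonal]

lemma dot_eq_one_of_norm_one {d : ℕ} (ξ : EuclideanSpace ℂ (Fin d)) (h : ‖ξ‖ = 1) :
    dotProduct (star (ξ : Fin d → ℂ)) (ξ : Fin d → ℂ) = 1 := by
  have h2 : ∑ i, Complex.normSq (ξ i) = 1 := by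
    have h' := EuclideanSpace.norm_eq ξ
    rw [h] at h'
    have h'' : ∑ i, ‖ξ i‖ ^ 2 = 1 := Real.sqrt_eq_one.mp h'.symm
    rw [← h'']
    exact Finset.sum_congr rfl fun i _ => by
      rw [Complex.normSq_eq_norm_sq]
  calc dotProduct (star (ξ : Fin d → ℂ)) (ξ : Fin d → ℂ)
      = ∑ i, ((Complex.normSq (ξ i) : ℝ) : ℂ) := by
        refine Finset.sum_congr rfl fun i _ => ?_
        simp [Complex.normSq_eq_conj_mul_self]
    _ = 1 := by rw [← Complex.ofReal_sum, h2, Complex.ofReal_one]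

open Matrix

theorem one_sub_max_eigenvalue_eq_min_trace_distance_to_pure
    (d : ℕ) (hd : 0 < d) (ρ : Matrix (Fin d) (Fin d) ℂ)
    (hρ : ρ.PosSemidef) (hρ1 : ρ.trace = 1) (lam : ℝ)
    (hlam : IsGreatest (Set.range hρ.1.eigenvalues) lam) :
    IsLeast
      {x : ℝ | ∃ ξ : EuclideanSpace ℂ (Fin d), ‖ξ‖ = 1 ∧
        x = traceNorm (ρ - Matrix.vecMulVec ξ (star ξ)) / 2}
      (1 - lam) := by
  set eig := hρ.1.eigenvalues with heig
  set U := hρ.1.eigenvectorUnitary with hU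
  set Uc : Matrix (Fin d) (Fin d) ℂ := (U : Matrix (Fin d) (Fin d) ℂ) with hUc
  have hspec : ρ = Uc * diagonal (fun i => (eig i : ℂ)) * star Uc := hρ.1.spectral_theorem
  have hnonneg : ∀ i, 0 ≤ eig i := fun i => hρ.eigenvalues_nonneg i
  have hsum : ∑ i, eig i = 1 := by
    have h1 : ((∑ i, eig i : ℝ) : ℂ) = 1 := by
      rw [Complex.ofReal_sum, ← trace_conj_diag U (fun i => (eig i : ℂ)), ← hspec, hρ1]
    exact_mod_cast h1
  have hle : ∀ i, eig i ≤ lam := fun i => hlam.2 ⟨i, rfl⟩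
  obtain ⟨i₀, hi₀⟩ := hlam.1
  have hlam1 : lam ≤ 1 := by
    rw [← hi₀, ← hsum]
    exact Finset.single_le_sum (fun i _ => hnonneg i) (Finset.mem_univ i₀)
  constructor
  · -- membership : the top eigenvector achieves 1 - lam
    set ξ : EuclideanSpace ℂ (Fin d) := WithLp.toLp 2 (fun j => Uc j i₀) with hξ
    have hU1' : star Uc * Uc = 1 := (Matrix.mem_unitaryGroup_iff').mp U.2
    have hcol : ∑ j, Complex.normSq (Uc j i₀) = 1 := by
      have h := congrFun (congrFun hU1' i₀) i₀
      rw [Matrix.mul_apply, Matrix.one_apply_eq] at h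
      have h2 : ((∑ j, Complex.normSq (Uc j i₀) : ℝ) : ℂ) = 1 := by
        rw [Complex.ofReal_sum, ← h]
        refine Finset.sum_congr rfl fun j _ => ?_
        simp [Matrix.star_apply, Complex.normSq_eq_conj_mul_self]
      exact_mod_cast h2
    have hnorm : ‖ξ‖ = 1 := by
      rw [EuclideanSpace.norm_eq]
      have : ∑ j, ‖ξ j‖ ^ 2 = 1 := by
        rw [← hcol]
        exact Finset.sum_congr rfl fun j _ => by
          simp [hξ, Complex.normSq_eq_norm_sq]
      rw [this, Real.sqrt_one]
    refine ⟨ξ, hnorm, ?_⟩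
    have hvv : Matrix.vecMulVec (ξ : Fin d → ℂ) (star (ξ : Fin d → ℂ))
        = Uc * diagonal (fun i => if i = i₀ then (1 : ℂ) else 0) * star Uc := by
      ext j k
      simp [Matrix.mul_apply, Matrix.diagonal_apply, Matrix.vecMulVec_apply, Matrix.star_apply,
        ite_mul, mul_ite, mul_zero, zero_mul, mul_one, Finset.sum_ite_eq, Finset.sum_ite_eq', hξ]
    have hdecomp : ρ - Matrix.vecMulVec (ξ : Fin d → ℂ) (star (ξ : Fin d → ℂ))
        = Uc * diagonal (fun i => ((eig i - if i = i₀ then 1 else 0 : ℝ) : ℂ)) * star Uc := by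
      rw [hspec, hvv, ← Matrix.sub_mul, ← Matrix.mul_sub, Matrix.diagonal_sub]
      have hfun : (fun i => (eig i : ℂ) - if i = i₀ then (1 : ℂ) else 0)
          = fun i => ((eig i - if i = i₀ then 1 else 0 : ℝ) : ℂ) := by
        funext i
        by_cases h : i = i₀ <;> simp [h]
      rw [hfun]
    rw [hdecomp, traceNorm_conj_diag U (fun i => (eig i - if i = i₀ then 1 else 0 : ℝ))]
    have habs : ∀ i, |eig i - if i = i₀ then 1 else 0|
        = eig i + (if i = i₀ then 1 - lam - eig i₀ else 0) := by
      intro i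
      by_cases h : i = i₀
      · subst h
        rw [if_pos rfl, if_pos rfl, abs_of_nonpos (by rw [hi₀]; linarith)]
        rw [hi₀]; ring
      · rw [if_neg h, if_neg h, sub_zero, add_zero, abs_of_nonneg (hnonneg i)]
    rw [Finset.sum_congr rfl fun i _ => habs i, Finset.sum_add_distrib, hsum,
      Finset.sum_ite_eq' Finset.univ i₀, if_pos (Finset.mem_univ i₀), hi₀]
    ring
  · -- lower bound
    rintro x ⟨ξ, hnorm, rfl⟩
    have hξ1 : dotProduct (star (ξ : Fin d → ℂ)) (ξ : Fin d → ℂ) = 1 :=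
      dot_eq_one_of_norm_one ξ hnorm
    set P := Matrix.vecMulVec (ξ : Fin d → ℂ) (star (ξ : Fin d → ℂ)) with hP
    have hPh : P.IsHermitian := by
      ext j k
      simp [hP, Matrix.vecMulVec_apply, Matrix.conjTranspose_apply, mul_comm]
    have hΔh : (ρ - P).IsHermitian := hρ.1.sub hPh
    set ν := hΔh.eigenvalues with hν
    set V := hΔh.eigenvectorUnitary with hV
    set Vc : Matrix (Fin d) (Fin d) ℂ := (V : Matrix (Fin d) (Fin d) ℂ) with hVc
    have hspecΔ : ρ - P = Vc * diagonal (fun i => (ν i : ℂ)) * star Vc := hΔh.spectral_theorem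
    -- trace of Δ is zero
    have htrP : P.trace = 1 := by
      rw [Matrix.trace, ← hξ1]
      simp [hP, Matrix.vecMulVec_apply, dotProduct, mul_comm]
    have hνsum : ∑ i, ν i = 0 := by
      have h1 : ((∑ i, ν i : ℝ) : ℂ) = 0 := by
        rw [Complex.ofReal_sum, ← trace_conj_diag V (fun i => (ν i : ℂ)), ← hspecΔ,
          Matrix.trace_sub, hρ1, htrP, sub_self]
      exact_mod_cast h1
    -- quadratic form of Δ at ξ
    obtain ⟨c, hc0, hc1, hcform⟩ := quad_form_eq V ν (ξ : Fin d → ℂ)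
    rw [hξ1] at hc1
    have hcsum : ∑ i, c i = 1 := by exact_mod_cast hc1
    have hcle1 : ∀ i, c i ≤ 1 := fun i => by
      rw [← hcsum]
      exact Finset.single_le_sum (fun j _ => hc0 j) (Finset.mem_univ i)
    -- quadratic form of ρ at ξ
    obtain ⟨e, he0, he1, heform⟩ := quad_form_eq U eig (ξ : Fin d → ℂ)
    rw [hξ1] at he1
    have hesum : ∑ i, e i = 1 := by exact_mod_cast he1
    have hρform : (∑ i, eig i * e i) ≤ lam := by
      calc ∑ i, eig i * e i ≤ ∑ i, lam * e i :=
            Finset.sum_le_sum fun i _ => mul_le_mul_of_nonneg_right (hle i) (he0 i)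
        _ = lam := by rw [← Finset.mul_sum, hesum, mul_one]
    -- P *ᵥ ξ = ξ
    have hPξ : P *ᵥ (ξ : Fin d → ℂ) = (ξ : Fin d → ℂ) := by
      funext j
      calc (P *ᵥ (ξ : Fin d → ℂ)) j
          = ξ j * (dotProduct (star (ξ : Fin d → ℂ)) (ξ : Fin d → ℂ)) := by
            simp [hP, Matrix.mulVec, Matrix.vecMulVec_apply, dotProduct, Finset.mul_sum,
              mul_assoc]
        _ = ξ j := by rw [hξ1, mul_one]
    -- relate the two quadratic forms
    have hkey : (∑ i, ν i * c i) = (∑ i, eig i * e i) - 1 := by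
      have h1 : dotProduct (star (ξ : Fin d → ℂ)) ((ρ - P) *ᵥ (ξ : Fin d → ℂ))
          = dotProduct (star (ξ : Fin d → ℂ)) (ρ *ᵥ (ξ : Fin d → ℂ)) - 1 := by
        rw [Matrix.sub_mulVec, dotProduct_sub, hPξ, hξ1]
      rw [hspecΔ] at h1
      rw [hspec] at h1
      rw [hcform, heform] at h1
      have : ((∑ i, ν i * c i : ℝ) : ℂ) = (((∑ i, eig i * e i) - 1 : ℝ) : ℂ) := by
        push_cast
        exact_mod_cast h1
      exact_mod_cast this
    -- final estimate
    rw [hspecΔ, traceNorm_conj_diag V ν]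
    have habs : ∑ i, |ν i| = 2 * ∑ i, max (-ν i) 0 := by
      have h : ∀ i, |ν i| = ν i + 2 * max (-ν i) 0 := by
        intro i
        rcases le_or_gt 0 (ν i) with h | h
        · rw [abs_of_nonneg h, max_eq_right (by linarith)]; ring
        · rw [abs_of_neg h, max_eq_left (by linarith)]; ring
      rw [Finset.sum_congr rfl fun i _ => h i, Finset.sum_add_distrib, hνsum, zero_add,
        ← Finset.mul_sum]
    have hlow : 1 - lam ≤ ∑ i, max (-ν i) 0 := by
      have h2 : ∑ i, (-ν i) * c i ≤ ∑ i, max (-ν i) 0 := by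
        refine Finset.sum_le_sum fun i _ => ?_
        calc (-ν i) * c i ≤ max (-ν i) 0 * c i :=
              mul_le_mul_of_nonneg_right (le_max_left _ _) (hc0 i)
          _ ≤ max (-ν i) 0 * 1 :=
              mul_le_mul_of_nonneg_left (hcle1 i) (le_max_right _ _)
          _ = max (-ν i) 0 := mul_one _
      have h3 : ∑ i, (-ν i) * c i = 1 - ∑ i, eig i * e i := by
        have : ∑ i, (-ν i) * c i = -(∑ i, ν i * c i) := by
          rw [← Finset.sum_neg_distrib]
          exact Finset.sum_congr rfl fun i _ => by ring
        rw [this, hkey]; ring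
      linarith
    rw [habs]
    linarith
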